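/- Fix τ ∈ ℝ and ω ∈ U, let η₊, η₋ be the explicit decaying solutions from the context, and set φ := i·λ(ω)·(e^(-iτ)+1) - ω·(e^(-iτ)-1); assume φ ≠ 0. Let f : ℝ → ℂ² be continuous with compact support. Define γ : ℝ → ℂ² by γ(x) = (i/φ)·[ η₊(x)·∫_{-∞}^{x} (η₋,₂(y)·f₁(y) + η₋,₁(y)·f₂(y)) dy + η₋(x)·∫_{x}^{∞} (η₊,₂(y)·f₁(y) + η₊,₁(y)·f₂(y)) dy ]. Then γ is continuous on ℝ, differentiable at every x ≠ 0, and satisfies the inhomogeneous Dirac equation (D(τ) - ω)γ = f away from 0: i·σ₃·γ'(x) + σ₁·γ(x) - ω·γ(x) = f(x) for every x < 0, and i·σ₃·γ'(x) + σ⋆(τ)·γ(x) - ω·γ(x) = f(x) for every x > 0. -/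

import Mathlib

open Complex Matrix MeasureTheory

/-- `U = ℂ \ ((-∞,-1] ∪ [1,∞))`. -/
def U : Set ℂ := {ω : ℂ | ω.im ≠ 0 ∨ (-1 < ω.re ∧ ω.re < 1)}

/-- `λ(ω) = (1-ω²)^(1/2)`, principal branch of the complex square root. -/
noncomputable def lam (ω : ℂ) : ℂ := (1 - ω ^ 2) ^ ((1 : ℂ) / 2)

/-- Pauli matrix σ₁. -/
def σ1 : Matrix (Fin 2) (Fin 2) ℂ := !![0, 1; 1, 0]

/-- Pauli matrix σ₃. -/
def σ3 : Matrix (Fin 2) (Fin 2) ℂ := !![1, 0; 0, -1]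

/-- σ⋆(τ) = [[0, e^(-iτ)],[e^(iτ), 0]]. -/
noncomputable def σstar (τ : ℝ) : Matrix (Fin 2) (Fin 2) ℂ :=
  !![0, Complex.exp (-(Complex.I * τ)); Complex.exp (Complex.I * τ), 0]

/-- The decaying solution η₊. -/
noncomputable def ηplus (τ : ℝ) (ω : ℂ) (x : ℝ) : Fin 2 → ℂ :=
  if 0 ≤ x then
    Complex.exp (-(lam ω) * x) • ![Complex.exp (-(Complex.I * τ)), ω + Complex.I * lam ω]
  else
    ((Complex.exp (-(Complex.I * τ)) - 1) * (ω + Complex.I * lam ω) / (2 * Complex.I * lam ω)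
        * Complex.exp (lam ω * x)) • ![1, ω - Complex.I * lam ω]
    + ((ω * (1 - Complex.exp (-(Complex.I * τ)))
          + Complex.I * lam ω * (1 + Complex.exp (-(Complex.I * τ)))) / (2 * Complex.I * lam ω)
        * Complex.exp (-(lam ω) * x)) • ![1, ω + Complex.I * lam ω]

/-- The decaying solution η₋. -/
noncomputable def ηminus (τ : ℝ) (ω : ℂ) (x : ℝ) : Fin 2 → ℂ :=
  if x ≤ 0 then
    Complex.exp (lam ω * x) • ![1, ω - Complex.I * lam ω]
  else
    ((ω * (Complex.exp (Complex.I * τ) - 1)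
          + Complex.I * lam ω * (Complex.exp (Complex.I * τ) + 1)) / (2 * Complex.I * lam ω)
        * Complex.exp (lam ω * x)) • ![Complex.exp (-(Complex.I * τ)), ω - Complex.I * lam ω]
    + ((1 - Complex.exp (Complex.I * τ)) * (ω - Complex.I * lam ω) / (2 * Complex.I * lam ω)
        * Complex.exp (-(lam ω) * x)) • ![Complex.exp (-(Complex.I * τ)), ω + Complex.I * lam ω]

namespace Stmt8Aux

lemma lam_sq (ω : ℂ) : lam ω ^ 2 = 1 - ω ^ 2 := by
  have h := Complex.cpow_nat_inv_pow (1 - ω ^ 2) (two_ne_zero)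
  rw [lam, show ((1:ℂ)/2) = (((2:ℕ):ℂ))⁻¹ by norm_num]
  exact_mod_cast h

lemma lam_ne {ω : ℂ} (hω : ω ∈ U) : lam ω ≠ 0 := by
  intro h
  have h2 := lam_sq ω
  rw [h] at h2
  have h3 : (ω - 1) * (ω + 1) = 0 := by linear_combination h2
  rcases mul_eq_zero.1 h3 with h4 | h4
  · have : ω = 1 := by linear_combination h4
    subst this
    simp [U, Set.mem_setOf_eq] at hω
  · have : ω = -1 := by linear_combination h4
    subst this
    simp [U, Set.mem_setOf_eq] at hω

lemma expDeriv (c : ℂ) (x : ℝ) :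
    HasDerivAt (fun y : ℝ => Complex.exp (c * y)) (c * Complex.exp (c * x)) x := by
  have h : HasDerivAt (fun z : ℂ => Complex.exp (c * z)) (c * Complex.exp (c * x)) (x : ℂ) := by
    simpa [mul_comm, Function.comp_def] using
      (Complex.hasDerivAt_exp (c * x)).comp (x:ℂ) ((hasDerivAt_id (x:ℂ)).const_mul c)
  exact h.comp_ofReal

noncomputable def cA (τ : ℝ) (ω : ℂ) : ℂ :=
  (Complex.exp (-(Complex.I * τ)) - 1) * (ω + Complex.I * lam ω) / (2 * Complex.I * lam ω)

noncomputable def cB (τ : ℝ) (ω : ℂ) : ℂ :=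
  (ω * (1 - Complex.exp (-(Complex.I * τ)))
    + Complex.I * lam ω * (1 + Complex.exp (-(Complex.I * τ)))) / (2 * Complex.I * lam ω)

noncomputable def cC (τ : ℝ) (ω : ℂ) : ℂ :=
  (ω * (Complex.exp (Complex.I * τ) - 1)
    + Complex.I * lam ω * (Complex.exp (Complex.I * τ) + 1)) / (2 * Complex.I * lam ω)

noncomputable def cD (τ : ℝ) (ω : ℂ) : ℂ :=
  (1 - Complex.exp (Complex.I * τ)) * (ω - Complex.I * lam ω) / (2 * Complex.I * lam ω)

noncomputable def Pneg (τ : ℝ) (ω : ℂ) (x : ℝ) : Fin 2 → ℂ :=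
  (cA τ ω * Complex.exp (lam ω * x)) • ![1, ω - Complex.I * lam ω]
  + (cB τ ω * Complex.exp (-(lam ω) * x)) • ![1, ω + Complex.I * lam ω]

noncomputable def Ppos (τ : ℝ) (ω : ℂ) (x : ℝ) : Fin 2 → ℂ :=
  Complex.exp (-(lam ω) * x) • ![Complex.exp (-(Complex.I * τ)), ω + Complex.I * lam ω]

noncomputable def Qneg (τ : ℝ) (ω : ℂ) (x : ℝ) : Fin 2 → ℂ :=
  Complex.exp (lam ω * x) • ![1, ω - Complex.I * lam ω]

noncomputable def Qpos (τ : ℝ) (ω : ℂ) (x : ℝ) : Fin 2 → ℂ :=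
  (cC τ ω * Complex.exp (lam ω * x)) • ![Complex.exp (-(Complex.I * τ)), ω - Complex.I * lam ω]
  + (cD τ ω * Complex.exp (-(lam ω) * x)) • ![Complex.exp (-(Complex.I * τ)), ω + Complex.I * lam ω]

lemma ηplus_pos (τ : ℝ) (ω : ℂ) {x : ℝ} (h : 0 ≤ x) : ηplus τ ω x = Ppos τ ω x := by
  rw [ηplus, if_pos h]; rfl

lemma ηplus_neg (τ : ℝ) (ω : ℂ) {x : ℝ} (h : ¬ 0 ≤ x) : ηplus τ ω x = Pneg τ ω x := by
  rw [ηplus, if_neg h]; rfl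

lemma ηminus_nonpos (τ : ℝ) (ω : ℂ) {x : ℝ} (h : x ≤ 0) : ηminus τ ω x = Qneg τ ω x := by
  rw [ηminus, if_pos h]; rfl

lemma ηminus_pos (τ : ℝ) (ω : ℂ) {x : ℝ} (h : ¬ x ≤ 0) : ηminus τ ω x = Qpos τ ω x := by
  rw [ηminus, if_neg h]; rfl

lemma hasDerivAt_Pneg (τ : ℝ) (ω : ℂ) (x : ℝ) :
    HasDerivAt (Pneg τ ω)
      ((cA τ ω * (lam ω * Complex.exp (lam ω * x))) • ![1, ω - Complex.I * lam ω]
        + (cB τ ω * (-(lam ω) * Complex.exp (-(lam ω) * x))) • ![1, ω + Complex.I * lam ω]) x := by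
  exact (((expDeriv (lam ω) x).const_mul (cA τ ω)).smul_const _).add
    (((expDeriv (-(lam ω)) x).const_mul (cB τ ω)).smul_const _)

lemma hasDerivAt_Qneg (τ : ℝ) (ω : ℂ) (x : ℝ) :
    HasDerivAt (Qneg τ ω)
      ((lam ω * Complex.exp (lam ω * x)) • ![1, ω - Complex.I * lam ω]) x := by
  exact (expDeriv (lam ω) x).smul_const _

lemma hasDerivAt_Ppos (τ : ℝ) (ω : ℂ) (x : ℝ) :
    HasDerivAt (Ppos τ ω)
      ((-(lam ω) * Complex.exp (-(lam ω) * x)) •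
        ![Complex.exp (-(Complex.I * τ)), ω + Complex.I * lam ω]) x := by
  exact (expDeriv (-(lam ω)) x).smul_const _

lemma hasDerivAt_Qpos (τ : ℝ) (ω : ℂ) (x : ℝ) :
    HasDerivAt (Qpos τ ω)
      ((cC τ ω * (lam ω * Complex.exp (lam ω * x))) •
          ![Complex.exp (-(Complex.I * τ)), ω - Complex.I * lam ω]
        + (cD τ ω * (-(lam ω) * Complex.exp (-(lam ω) * x))) •
          ![Complex.exp (-(Complex.I * τ)), ω + Complex.I * lam ω]) x := by
  exact (((expDeriv (lam ω) x).const_mul (cC τ ω)).smul_const _).add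
    (((expDeriv (-(lam ω)) x).const_mul (cD τ ω)).smul_const _)

lemma contExpMul (c : ℂ) : Continuous (fun x : ℝ => Complex.exp (c * x)) :=
  Complex.continuous_exp.comp (continuous_const.mul Complex.continuous_ofReal)

lemma cont_Pneg (τ : ℝ) (ω : ℂ) : Continuous (Pneg τ ω) :=
  ((continuous_const.mul (contExpMul (lam ω))).smul continuous_const).add
    ((continuous_const.mul (contExpMul (-(lam ω)))).smul continuous_const)

lemma cont_Ppos (τ : ℝ) (ω : ℂ) : Continuous (Ppos τ ω) :=
  (contExpMul (-(lam ω))).smul continuous_const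

lemma cont_Qneg (τ : ℝ) (ω : ℂ) : Continuous (Qneg τ ω) :=
  (contExpMul (lam ω)).smul continuous_const

lemma cont_Qpos (τ : ℝ) (ω : ℂ) : Continuous (Qpos τ ω) :=
  ((continuous_const.mul (contExpMul (lam ω))).smul continuous_const).add
    ((continuous_const.mul (contExpMul (-(lam ω)))).smul continuous_const)

lemma P_bd (τ : ℝ) {ω : ℂ} (hl0 : lam ω ≠ 0) : Ppos τ ω 0 = Pneg τ ω 0 := by
  funext i
  fin_cases i <;>
    simp only [Ppos, Pneg, cA, cB, Complex.ofReal_zero, mul_zero, Complex.exp_zero, mul_one,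
      one_smul, Pi.add_apply, Pi.smul_apply, smul_eq_mul, Matrix.cons_val_zero, Matrix.cons_val_one,
      Matrix.head_cons, Fin.zero_eta, Fin.mk_one] <;>
  · field_simp
    ring

lemma Q_bd (τ : ℝ) {ω : ℂ} (hl0 : lam ω ≠ 0) : Qneg τ ω 0 = Qpos τ ω 0 := by
  have hEinv : Complex.exp (Complex.I * (τ:ℂ)) = (Complex.exp (-(Complex.I * τ)))⁻¹ := by
    rw [Complex.exp_neg, inv_inv]
  funext i
  fin_cases i <;>
    simp only [Qpos, Qneg, cC, cD, hEinv, Complex.ofReal_zero, mul_zero, Complex.exp_zero, mul_one,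
      one_smul, Pi.add_apply, Pi.smul_apply, smul_eq_mul, Matrix.cons_val_zero, Matrix.cons_val_one,
      Matrix.head_cons, Fin.zero_eta, Fin.mk_one] <;>
  · field_simp
    ring

lemma cont_ηplus (τ : ℝ) {ω : ℂ} (hl0 : lam ω ≠ 0) : Continuous (ηplus τ ω) := by
  have h : Continuous (fun x : ℝ => if (0:ℝ) ≤ x then Ppos τ ω x else Pneg τ ω x) := by
    apply Continuous.if_le (cont_Ppos τ ω) (cont_Pneg τ ω) continuous_const continuous_id
    intro x hx
    have hx0 : x = 0 := by simpa using hx.symm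
    subst hx0
    exact P_bd τ hl0
  have he : ηplus τ ω = fun x : ℝ => if (0:ℝ) ≤ x then Ppos τ ω x else Pneg τ ω x := by
    funext x
    by_cases hx : (0:ℝ) ≤ x
    · rw [if_pos hx, ηplus_pos τ ω hx]
    · rw [if_neg hx, ηplus_neg τ ω hx]
  rw [he]; exact h

lemma cont_ηminus (τ : ℝ) {ω : ℂ} (hl0 : lam ω ≠ 0) : Continuous (ηminus τ ω) := by
  have h : Continuous (fun x : ℝ => if x ≤ (0:ℝ) then Qneg τ ω x else Qpos τ ω x) := by
    apply Continuous.if_le (cont_Qneg τ ω) (cont_Qpos τ ω) continuous_id continuous_const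
    intro x hx
    have hx0 : x = 0 := by simpa using hx
    subst hx0
    exact Q_bd τ hl0
  have he : ηminus τ ω = fun x : ℝ => if x ≤ (0:ℝ) then Qneg τ ω x else Qpos τ ω x := by
    funext x
    by_cases hx : x ≤ (0:ℝ)
    · rw [if_pos hx, ηminus_nonpos τ ω hx]
    · rw [if_neg hx, ηminus_pos τ ω hx]
  rw [he]; exact h

end Stmt8Aux

set_option maxHeartbeats 2000000 in
theorem stmt8 (τ : ℝ) (ω : ℂ) (hω : ω ∈ U)
    (hφ : Complex.I * lam ω * (Complex.exp (-(Complex.I * τ)) + 1)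
        - ω * (Complex.exp (-(Complex.I * τ)) - 1) ≠ 0)
    (f : ℝ → Fin 2 → ℂ) (hf : Continuous f) (hsupp : HasCompactSupport f) :
    let φ : ℂ := Complex.I * lam ω * (Complex.exp (-(Complex.I * τ)) + 1)
        - ω * (Complex.exp (-(Complex.I * τ)) - 1)
    let γ : ℝ → Fin 2 → ℂ := fun x =>
      (Complex.I / φ) •
        ((∫ y in Set.Iic x, (ηminus τ ω y 1 * f y 0 + ηminus τ ω y 0 * f y 1)) • ηplus τ ω x
          + (∫ y in Set.Ici x, (ηplus τ ω y 1 * f y 0 + ηplus τ ω y 0 * f y 1)) • ηminus τ ω x)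
    Continuous γ ∧
    (∀ x : ℝ, x ≠ 0 → DifferentiableAt ℝ γ x) ∧
    (∀ x : ℝ, x < 0 →
      Complex.I • σ3.mulVec (deriv γ x) + σ1.mulVec (γ x) - ω • γ x = f x) ∧
    (∀ x : ℝ, 0 < x →
      Complex.I • σ3.mulVec (deriv γ x) + (σstar τ).mulVec (γ x) - ω • γ x = f x) := by
  
  intro φ γ
  classical
  have hl2 : lam ω ^ 2 = 1 - ω ^ 2 := Stmt8Aux.lam_sq ω
  have hl0 : lam ω ≠ 0 := Stmt8Aux.lam_ne hω
  have hφ0 : φ ≠ 0 := hφ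
  have hφdef : φ = Complex.I * lam ω * (Complex.exp (-(Complex.I * τ)) + 1)
      - ω * (Complex.exp (-(Complex.I * τ)) - 1) := rfl
  have hEE : Complex.exp (Complex.I * (τ:ℂ)) * Complex.exp (-(Complex.I * τ)) = 1 := by
    rw [← Complex.exp_add]; simp
  have hEinv : Complex.exp (Complex.I * (τ:ℂ)) = (Complex.exp (-(Complex.I * τ)))⁻¹ := by
    rw [Complex.exp_neg, inv_inv]
  set gm : ℝ → ℂ := fun y => ηminus τ ω y 1 * f y 0 + ηminus τ ω y 0 * f y 1 with hgm
  set gp : ℝ → ℂ := fun y => ηplus τ ω y 1 * f y 0 + ηplus τ ω y 0 * f y 1 with hgp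
  have hf0 : Continuous (fun y => f y 0) := (continuous_apply 0).comp hf
  have hf1 : Continuous (fun y => f y 1) := (continuous_apply 1).comp hf
  have hηmc : Continuous (ηminus τ ω) := Stmt8Aux.cont_ηminus τ hl0
  have hηpc : Continuous (ηplus τ ω) := Stmt8Aux.cont_ηplus τ hl0
  have hgmc : Continuous gm :=
    (((continuous_apply 1).comp hηmc).mul hf0).add (((continuous_apply 0).comp hηmc).mul hf1)
  have hgpc : Continuous gp :=
    (((continuous_apply 1).comp hηpc).mul hf0).add (((continuous_apply 0).comp hηpc).mul hf1)
  have hcf0 : HasCompactSupport (fun y => f y 0) :=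
    hsupp.comp_left (g := fun v : Fin 2 → ℂ => v 0) rfl
  have hcf1 : HasCompactSupport (fun y => f y 1) :=
    hsupp.comp_left (g := fun v : Fin 2 → ℂ => v 1) rfl
  have hgms : HasCompactSupport gm :=
    HasCompactSupport.add
      (HasCompactSupport.mul_left (f := fun y => ηminus τ ω y 1) hcf0)
      (HasCompactSupport.mul_left (f := fun y => ηminus τ ω y 0) hcf1)
  have hgps : HasCompactSupport gp :=
    HasCompactSupport.add
      (HasCompactSupport.mul_left (f := fun y => ηplus τ ω y 1) hcf0)
      (HasCompactSupport.mul_left (f := fun y => ηplus τ ω y 0) hcf1)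
  have hgmi : Integrable gm := hgmc.integrable_of_hasCompactSupport hgms
  have hgpi : Integrable gp := hgpc.integrable_of_hasCompactSupport hgps
  set F : ℝ → ℂ := fun t => ∫ y in Set.Iic t, gm y with hFdef
  set G : ℝ → ℂ := fun t => ∫ y in Set.Ici t, gp y with hGdef
  have hγdef : ∀ t, γ t = (Complex.I / φ) • (F t • ηplus τ ω t + G t • ηminus τ ω t) :=
    fun t => rfl
  have hFd : ∀ t : ℝ, HasDerivAt F (gm t) t := by
    intro t
    have h1 : F = fun u => (∫ y in Set.Iic 0, gm y) + ∫ y in (0:ℝ)..u, gm y := by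
      funext u
      simp only [hFdef]
      rw [← intervalIntegral.integral_Iic_sub_Iic hgmi.integrableOn hgmi.integrableOn]
      ring
    rw [h1]
    simpa [Pi.add_def] using (hasDerivAt_const t (∫ y in Set.Iic 0, gm y)).add
      (intervalIntegral.integral_hasDerivAt_right hgmi.intervalIntegrable
        (hgmc.stronglyMeasurable.stronglyMeasurableAtFilter) hgmc.continuousAt)
  have hGd : ∀ t : ℝ, HasDerivAt G (-(gp t)) t := by
    intro t
    have h1 : G = fun u => (∫ y, gp y) - ((∫ y in Set.Iic 0, gp y) + ∫ y in (0:ℝ)..u, gp y) := by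
      funext u
      simp only [hGdef]
      rw [← intervalIntegral.integral_Iic_sub_Iic hgpi.integrableOn hgpi.integrableOn,
        ← intervalIntegral.integral_Iio_add_Ici (hgpi.integrableOn) (hgpi.integrableOn) (b := u)]
      simp only [integral_Iic_eq_integral_Iio]
      ring
    rw [h1]
    simpa [Pi.add_def, Pi.sub_def] using ((hasDerivAt_const t _).sub ((hasDerivAt_const t _).add
      (intervalIntegral.integral_hasDerivAt_right hgpi.intervalIntegrable
        (hgpc.stronglyMeasurable.stronglyMeasurableAtFilter) hgpc.continuousAt)))
  have hFc : Continuous F := by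
    rw [continuous_iff_continuousAt]; exact fun t => (hFd t).continuousAt
  have hGc : Continuous G := by
    rw [continuous_iff_continuousAt]; exact fun t => (hGd t).continuousAt
  have hDneg : ∀ x : ℝ, x < 0 → HasDerivAt γ
      ((Complex.I / φ) •
        ((F x • ((Stmt8Aux.cA τ ω * (lam ω * Complex.exp (lam ω * x))) • ![1, ω - Complex.I * lam ω]
            + (Stmt8Aux.cB τ ω * (-(lam ω) * Complex.exp (-(lam ω) * x))) • ![1, ω + Complex.I * lam ω])
          + gm x • Stmt8Aux.Pneg τ ω x)
        + (G x • ((lam ω * Complex.exp (lam ω * x)) • ![1, ω - Complex.I * lam ω])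
          + (-(gp x)) • Stmt8Aux.Qneg τ ω x))) x := by
    intro x hx
    have h1 := (hFd x).smul (Stmt8Aux.hasDerivAt_Pneg τ ω x)
    have h2 := (hGd x).smul (Stmt8Aux.hasDerivAt_Qneg τ ω x)
    have h3 := (h1.add h2).const_smul (Complex.I / φ)
    refine h3.congr_of_eventuallyEq ?_
    filter_upwards [Iio_mem_nhds hx] with y hy
    rw [hγdef y, Stmt8Aux.ηplus_neg τ ω (not_le.2 hy), Stmt8Aux.ηminus_nonpos τ ω hy.le]
    rfl
  have hDpos : ∀ x : ℝ, 0 < x → HasDerivAt γ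
      ((Complex.I / φ) •
        ((F x • ((-(lam ω) * Complex.exp (-(lam ω) * x)) •
              ![Complex.exp (-(Complex.I * τ)), ω + Complex.I * lam ω])
          + gm x • Stmt8Aux.Ppos τ ω x)
        + (G x • ((Stmt8Aux.cC τ ω * (lam ω * Complex.exp (lam ω * x))) •
              ![Complex.exp (-(Complex.I * τ)), ω - Complex.I * lam ω]
            + (Stmt8Aux.cD τ ω * (-(lam ω) * Complex.exp (-(lam ω) * x))) •
              ![Complex.exp (-(Complex.I * τ)), ω + Complex.I * lam ω])
          + (-(gp x)) • Stmt8Aux.Qpos τ ω x))) x := by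
    intro x hx
    have h1 := (hFd x).smul (Stmt8Aux.hasDerivAt_Ppos τ ω x)
    have h2 := (hGd x).smul (Stmt8Aux.hasDerivAt_Qpos τ ω x)
    have h3 := (h1.add h2).const_smul (Complex.I / φ)
    refine h3.congr_of_eventuallyEq ?_
    filter_upwards [Ioi_mem_nhds hx] with y hy
    rw [hγdef y, Stmt8Aux.ηplus_pos τ ω hy.le, Stmt8Aux.ηminus_pos τ ω (not_le.2 hy)]
    rfl
  refine ⟨?_, ?_, ?_, ?_⟩
  · have hfun : γ = fun t => (Complex.I / φ) • (F t • ηplus τ ω t + G t • ηminus τ ω t) :=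
      funext hγdef
    rw [hfun]
    exact Continuous.smul (f := fun _ => Complex.I / φ)
      (g := fun t => F t • ηplus τ ω t + G t • ηminus τ ω t) continuous_const ((hFc.smul hηpc).add (hGc.smul hηmc))
  · intro x hx
    rcases hx.lt_or_gt with h | h
    · exact (hDneg x h).differentiableAt
    · exact (hDpos x h).differentiableAt
  · intro x hx
    have hx' : ¬ (0:ℝ) ≤ x := not_le.2 hx
    have claim2 : Complex.I • σ3.mulVec ((Complex.I / φ) •
        ((Stmt8Aux.Qneg τ ω x 1 * f x 0 + Stmt8Aux.Qneg τ ω x 0 * f x 1) • Stmt8Aux.Pneg τ ω x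
          + (-(Stmt8Aux.Pneg τ ω x 1 * f x 0 + Stmt8Aux.Pneg τ ω x 0 * f x 1)) • Stmt8Aux.Qneg τ ω x))
        = f x := by
      have step1 : (Stmt8Aux.Qneg τ ω x 1 * f x 0 + Stmt8Aux.Qneg τ ω x 0 * f x 1) • Stmt8Aux.Pneg τ ω x
          + (-(Stmt8Aux.Pneg τ ω x 1 * f x 0 + Stmt8Aux.Pneg τ ω x 0 * f x 1)) • Stmt8Aux.Qneg τ ω x
          = (-φ) • σ3.mulVec (f x) := by
        have hp1 : Complex.exp (lam ω * (x:ℂ)) * (Complex.exp (lam ω * (x:ℂ)))⁻¹ = 1 :=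
          mul_inv_cancel₀ (Complex.exp_ne_zero _)
        have hW1 : Complex.exp (Complex.I * (τ:ℂ)) * (Complex.exp (Complex.I * (τ:ℂ)))⁻¹ = 1 :=
          mul_inv_cancel₀ (Complex.exp_ne_zero _)
        have hi1 : Complex.I * Complex.I⁻¹ = 1 := mul_inv_cancel₀ Complex.I_ne_zero
        have hl1 : lam ω * (lam ω)⁻¹ = 1 := mul_inv_cancel₀ hl0
        funext i
        fin_cases i
        · simp [Stmt8Aux.Pneg, Stmt8Aux.Qneg, Stmt8Aux.cA, Stmt8Aux.cB, hφdef, σ3,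
            Pi.add_apply, Pi.smul_apply, Pi.neg_apply, smul_eq_mul,
            Matrix.cons_val_zero, Matrix.cons_val_one, Matrix.head_cons, Matrix.cons_val',
            Matrix.head_fin_const, Matrix.empty_val', Matrix.cons_val_fin_one,
            Matrix.mulVec, dotProduct, Fin.sum_univ_two, Fin.isValue,
            neg_mul, Complex.exp_neg, mul_one, one_mul]
          linear_combination (((-1:ℂ) * Complex.I * Complex.I⁻¹ * lam ω * (lam ω)⁻¹ * ω * f x 0) + ((-1:ℂ) * Complex.I^2 * Complex.I⁻¹ * lam ω^2 * (lam ω)⁻¹ * f x 0) + ((Complex.exp (Complex.I * (τ:ℂ)))⁻¹ * Complex.I * Complex.I⁻¹ * lam ω * (lam ω)⁻¹ * ω * f x 0) + ((-1:ℂ) * (Complex.exp (Complex.I * (τ:ℂ)))⁻¹ * Complex.I^2 * Complex.I⁻¹ * lam ω^2 * (lam ω)⁻¹ * f x 0)) * hp1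
            + (((-1:ℂ) * lam ω * (lam ω)⁻¹ * ω * f x 0) + ((-1:ℂ) * Complex.I * lam ω^2 * (lam ω)⁻¹ * f x 0) + ((Complex.exp (Complex.I * (τ:ℂ)))⁻¹ * lam ω * (lam ω)⁻¹ * ω * f x 0) + ((-1:ℂ) * (Complex.exp (Complex.I * (τ:ℂ)))⁻¹ * Complex.I * lam ω^2 * (lam ω)⁻¹ * f x 0)) * hi1
            + (((-1:ℂ) * ω * f x 0) + ((-1:ℂ) * Complex.I * lam ω * f x 0) + ((Complex.exp (Complex.I * (τ:ℂ)))⁻¹ * ω * f x 0) + ((-1:ℂ) * (Complex.exp (Complex.I * (τ:ℂ)))⁻¹ * Complex.I * lam ω * f x 0)) * hl1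
        · simp [Stmt8Aux.Pneg, Stmt8Aux.Qneg, Stmt8Aux.cA, Stmt8Aux.cB, hφdef, σ3,
            Pi.add_apply, Pi.smul_apply, Pi.neg_apply, smul_eq_mul,
            Matrix.cons_val_zero, Matrix.cons_val_one, Matrix.head_cons, Matrix.cons_val',
            Matrix.head_fin_const, Matrix.empty_val', Matrix.cons_val_fin_one,
            Matrix.mulVec, dotProduct, Fin.sum_univ_two, Fin.isValue,
            neg_mul, Complex.exp_neg, mul_one, one_mul]
          linear_combination ((Complex.I * Complex.I⁻¹ * lam ω * (lam ω)⁻¹ * ω * f x 1) + (Complex.I^2 * Complex.I⁻¹ * lam ω^2 * (lam ω)⁻¹ * f x 1) + ((-1:ℂ) * (Complex.exp (Complex.I * (τ:ℂ)))⁻¹ * Complex.I * Complex.I⁻¹ * lam ω * (lam ω)⁻¹ * ω * f x 1) + ((Complex.exp (Complex.I * (τ:ℂ)))⁻¹ * Complex.I^2 * Complex.I⁻¹ * lam ω^2 * (lam ω)⁻¹ * f x 1)) * hp1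
            + ((lam ω * (lam ω)⁻¹ * ω * f x 1) + (Complex.I * lam ω^2 * (lam ω)⁻¹ * f x 1) + ((-1:ℂ) * (Complex.exp (Complex.I * (τ:ℂ)))⁻¹ * lam ω * (lam ω)⁻¹ * ω * f x 1) + ((Complex.exp (Complex.I * (τ:ℂ)))⁻¹ * Complex.I * lam ω^2 * (lam ω)⁻¹ * f x 1)) * hi1
            + ((ω * f x 1) + (Complex.I * lam ω * f x 1) + ((-1:ℂ) * (Complex.exp (Complex.I * (τ:ℂ)))⁻¹ * ω * f x 1) + ((Complex.exp (Complex.I * (τ:ℂ)))⁻¹ * Complex.I * lam ω * f x 1)) * hl1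
      rw [step1, Matrix.mulVec_smul, Matrix.mulVec_smul, smul_smul, smul_smul]
      have hsc : Complex.I * (Complex.I / φ) * -φ = 1 := by
        have h9 : Complex.I * (Complex.I / φ) * -φ = -(Complex.I^2) * (φ / φ) := by ring
        rw [h9, div_self hφ0, Complex.I_sq]; ring
      rw [hsc, one_smul]
      funext i
      fin_cases i <;> simp [σ3, Matrix.mulVec, dotProduct, Fin.sum_univ_two]
    have c20 := congrFun claim2 0
    have c21 := congrFun claim2 1
    rw [(hDneg x hx).deriv, hγdef x, Stmt8Aux.ηplus_neg τ ω hx', Stmt8Aux.ηminus_nonpos τ ω hx.le]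
    simp only [hgm, hgp, Stmt8Aux.ηplus_neg τ ω hx', Stmt8Aux.ηminus_nonpos τ ω hx.le]
    simp [Stmt8Aux.Pneg, Stmt8Aux.Qneg, Stmt8Aux.Ppos, Stmt8Aux.Qpos, σ3, σ1, σstar,
      Pi.add_apply, Pi.sub_apply, Pi.smul_apply, Pi.neg_apply, smul_eq_mul,
      Matrix.cons_val_zero, Matrix.cons_val_one, Matrix.head_cons, Matrix.cons_val',
      Matrix.head_fin_const, Matrix.empty_val', Matrix.cons_val_fin_one,
      Matrix.mulVec, dotProduct, Fin.sum_univ_two, Fin.isValue,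
      neg_mul, mul_one, one_mul, mul_zero, zero_mul, add_zero, zero_add, mul_neg, neg_neg] at c20 c21
    funext i
    fin_cases i
    · simp [Stmt8Aux.Pneg, Stmt8Aux.Qneg, Stmt8Aux.Ppos, Stmt8Aux.Qpos, σ3, σ1, σstar,
      Pi.add_apply, Pi.sub_apply, Pi.smul_apply, Pi.neg_apply, smul_eq_mul,
      Matrix.cons_val_zero, Matrix.cons_val_one, Matrix.head_cons, Matrix.cons_val',
      Matrix.head_fin_const, Matrix.empty_val', Matrix.cons_val_fin_one,
      Matrix.mulVec, dotProduct, Fin.sum_univ_two, Fin.isValue,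
      neg_mul, mul_one, one_mul, mul_zero, zero_mul, add_zero, zero_add, mul_neg, neg_neg]
      linear_combination c20
    · simp [Stmt8Aux.Pneg, Stmt8Aux.Qneg, Stmt8Aux.Ppos, Stmt8Aux.Qpos, σ3, σ1, σstar,
      Pi.add_apply, Pi.sub_apply, Pi.smul_apply, Pi.neg_apply, smul_eq_mul,
      Matrix.cons_val_zero, Matrix.cons_val_one, Matrix.head_cons, Matrix.cons_val',
      Matrix.head_fin_const, Matrix.empty_val', Matrix.cons_val_fin_one,
      Matrix.mulVec, dotProduct, Fin.sum_univ_two, Fin.isValue,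
      neg_mul, mul_one, one_mul, mul_zero, zero_mul, add_zero, zero_add, mul_neg, neg_neg]
      linear_combination c21
        + ((Complex.I / φ) * (F x * (Stmt8Aux.cA τ ω * Complex.exp (lam ω * (x:ℂ))
              + Stmt8Aux.cB τ ω * Complex.exp (-(lam ω * (x:ℂ))))
            + G x * Complex.exp (lam ω * (x:ℂ))) * lam ω ^ 2) * Complex.I_sq
        - ((Complex.I / φ) * (F x * (Stmt8Aux.cA τ ω * Complex.exp (lam ω * (x:ℂ))
              + Stmt8Aux.cB τ ω * Complex.exp (-(lam ω * (x:ℂ))))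
            + G x * Complex.exp (lam ω * (x:ℂ)))) * hl2
  · intro x hx
    have hx' : ¬ x ≤ (0:ℝ) := not_le.2 hx
    have claim2 : Complex.I • σ3.mulVec ((Complex.I / φ) •
        ((Stmt8Aux.Qpos τ ω x 1 * f x 0 + Stmt8Aux.Qpos τ ω x 0 * f x 1) • Stmt8Aux.Ppos τ ω x
          + (-(Stmt8Aux.Ppos τ ω x 1 * f x 0 + Stmt8Aux.Ppos τ ω x 0 * f x 1)) • Stmt8Aux.Qpos τ ω x))
        = f x := by
      have step1 : (Stmt8Aux.Qpos τ ω x 1 * f x 0 + Stmt8Aux.Qpos τ ω x 0 * f x 1) • Stmt8Aux.Ppos τ ω x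
          + (-(Stmt8Aux.Ppos τ ω x 1 * f x 0 + Stmt8Aux.Ppos τ ω x 0 * f x 1)) • Stmt8Aux.Qpos τ ω x
          = (-φ) • σ3.mulVec (f x) := by
        have hp1 : Complex.exp (lam ω * (x:ℂ)) * (Complex.exp (lam ω * (x:ℂ)))⁻¹ = 1 :=
          mul_inv_cancel₀ (Complex.exp_ne_zero _)
        have hW1 : Complex.exp (Complex.I * (τ:ℂ)) * (Complex.exp (Complex.I * (τ:ℂ)))⁻¹ = 1 :=
          mul_inv_cancel₀ (Complex.exp_ne_zero _)
        have hi1 : Complex.I * Complex.I⁻¹ = 1 := mul_inv_cancel₀ Complex.I_ne_zero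
        have hl1 : lam ω * (lam ω)⁻¹ = 1 := mul_inv_cancel₀ hl0
        funext i
        fin_cases i
        · simp [Stmt8Aux.Ppos, Stmt8Aux.Qpos, Stmt8Aux.cC, Stmt8Aux.cD, hφdef, σ3,
            Pi.add_apply, Pi.smul_apply, Pi.neg_apply, smul_eq_mul,
            Matrix.cons_val_zero, Matrix.cons_val_one, Matrix.head_cons, Matrix.cons_val',
            Matrix.head_fin_const, Matrix.empty_val', Matrix.cons_val_fin_one,
            Matrix.mulVec, dotProduct, Fin.sum_univ_two, Fin.isValue,
            neg_mul, Complex.exp_neg, mul_one, one_mul]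
          linear_combination (((Complex.exp (Complex.I * (τ:ℂ)))⁻¹ * Complex.I * Complex.I⁻¹ * lam ω * (lam ω)⁻¹ * ω * f x 0) + ((-1:ℂ) * (Complex.exp (Complex.I * (τ:ℂ)))⁻¹ * Complex.I^2 * Complex.I⁻¹ * lam ω^2 * (lam ω)⁻¹ * f x 0) + ((-1:ℂ) * Complex.exp (Complex.I * (τ:ℂ)) * (Complex.exp (Complex.I * (τ:ℂ)))⁻¹ * Complex.I * Complex.I⁻¹ * lam ω * (lam ω)⁻¹ * ω * f x 0) + ((-1:ℂ) * Complex.exp (Complex.I * (τ:ℂ)) * (Complex.exp (Complex.I * (τ:ℂ)))⁻¹ * Complex.I^2 * Complex.I⁻¹ * lam ω^2 * (lam ω)⁻¹ * f x 0)) * hp1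
            + (((-1:ℂ) * Complex.I * Complex.I⁻¹ * lam ω * (lam ω)⁻¹ * ω * f x 0) + ((-1:ℂ) * Complex.I^2 * Complex.I⁻¹ * lam ω^2 * (lam ω)⁻¹ * f x 0)) * hW1
            + (((-1:ℂ) * lam ω * (lam ω)⁻¹ * ω * f x 0) + ((-1:ℂ) * Complex.I * lam ω^2 * (lam ω)⁻¹ * f x 0) + ((Complex.exp (Complex.I * (τ:ℂ)))⁻¹ * lam ω * (lam ω)⁻¹ * ω * f x 0) + ((-1:ℂ) * (Complex.exp (Complex.I * (τ:ℂ)))⁻¹ * Complex.I * lam ω^2 * (lam ω)⁻¹ * f x 0)) * hi1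
            + (((-1:ℂ) * ω * f x 0) + ((-1:ℂ) * Complex.I * lam ω * f x 0) + ((Complex.exp (Complex.I * (τ:ℂ)))⁻¹ * ω * f x 0) + ((-1:ℂ) * (Complex.exp (Complex.I * (τ:ℂ)))⁻¹ * Complex.I * lam ω * f x 0)) * hl1
        · simp [Stmt8Aux.Ppos, Stmt8Aux.Qpos, Stmt8Aux.cC, Stmt8Aux.cD, hφdef, σ3,
            Pi.add_apply, Pi.smul_apply, Pi.neg_apply, smul_eq_mul,
            Matrix.cons_val_zero, Matrix.cons_val_one, Matrix.head_cons, Matrix.cons_val',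
            Matrix.head_fin_const, Matrix.empty_val', Matrix.cons_val_fin_one,
            Matrix.mulVec, dotProduct, Fin.sum_univ_two, Fin.isValue,
            neg_mul, Complex.exp_neg, mul_one, one_mul]
          linear_combination (((-1:ℂ) * (Complex.exp (Complex.I * (τ:ℂ)))⁻¹ * Complex.I * Complex.I⁻¹ * lam ω * (lam ω)⁻¹ * ω * f x 1) + ((Complex.exp (Complex.I * (τ:ℂ)))⁻¹ * Complex.I^2 * Complex.I⁻¹ * lam ω^2 * (lam ω)⁻¹ * f x 1) + (Complex.exp (Complex.I * (τ:ℂ)) * (Complex.exp (Complex.I * (τ:ℂ)))⁻¹ * Complex.I * Complex.I⁻¹ * lam ω * (lam ω)⁻¹ * ω * f x 1) + (Complex.exp (Complex.I * (τ:ℂ)) * (Complex.exp (Complex.I * (τ:ℂ)))⁻¹ * Complex.I^2 * Complex.I⁻¹ * lam ω^2 * (lam ω)⁻¹ * f x 1)) * hp1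
            + ((Complex.I * Complex.I⁻¹ * lam ω * (lam ω)⁻¹ * ω * f x 1) + (Complex.I^2 * Complex.I⁻¹ * lam ω^2 * (lam ω)⁻¹ * f x 1)) * hW1
            + ((lam ω * (lam ω)⁻¹ * ω * f x 1) + (Complex.I * lam ω^2 * (lam ω)⁻¹ * f x 1) + ((-1:ℂ) * (Complex.exp (Complex.I * (τ:ℂ)))⁻¹ * lam ω * (lam ω)⁻¹ * ω * f x 1) + ((Complex.exp (Complex.I * (τ:ℂ)))⁻¹ * Complex.I * lam ω^2 * (lam ω)⁻¹ * f x 1)) * hi1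
            + ((ω * f x 1) + (Complex.I * lam ω * f x 1) + ((-1:ℂ) * (Complex.exp (Complex.I * (τ:ℂ)))⁻¹ * ω * f x 1) + ((Complex.exp (Complex.I * (τ:ℂ)))⁻¹ * Complex.I * lam ω * f x 1)) * hl1
      rw [step1, Matrix.mulVec_smul, Matrix.mulVec_smul, smul_smul, smul_smul]
      have hsc : Complex.I * (Complex.I / φ) * -φ = 1 := by
        have h9 : Complex.I * (Complex.I / φ) * -φ = -(Complex.I^2) * (φ / φ) := by ring
        rw [h9, div_self hφ0, Complex.I_sq]; ring
      rw [hsc, one_smul]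
      funext i
      fin_cases i <;> simp [σ3, Matrix.mulVec, dotProduct, Fin.sum_univ_two]
    have c20 := congrFun claim2 0
    have c21 := congrFun claim2 1
    rw [(hDpos x hx).deriv, hγdef x, Stmt8Aux.ηplus_pos τ ω hx.le, Stmt8Aux.ηminus_pos τ ω hx']
    simp only [hgm, hgp, Stmt8Aux.ηplus_pos τ ω hx.le, Stmt8Aux.ηminus_pos τ ω hx']
    simp [Stmt8Aux.Pneg, Stmt8Aux.Qneg, Stmt8Aux.Ppos, Stmt8Aux.Qpos, σ3, σ1, σstar,
      Pi.add_apply, Pi.sub_apply, Pi.smul_apply, Pi.neg_apply, smul_eq_mul,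
      Matrix.cons_val_zero, Matrix.cons_val_one, Matrix.head_cons, Matrix.cons_val',
      Matrix.head_fin_const, Matrix.empty_val', Matrix.cons_val_fin_one,
      Matrix.mulVec, dotProduct, Fin.sum_univ_two, Fin.isValue,
      neg_mul, mul_one, one_mul, mul_zero, zero_mul, add_zero, zero_add, mul_neg, neg_neg] at c20 c21
    funext i
    fin_cases i
    · simp [Stmt8Aux.Pneg, Stmt8Aux.Qneg, Stmt8Aux.Ppos, Stmt8Aux.Qpos, σ3, σ1, σstar,
      Pi.add_apply, Pi.sub_apply, Pi.smul_apply, Pi.neg_apply, smul_eq_mul,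
      Matrix.cons_val_zero, Matrix.cons_val_one, Matrix.head_cons, Matrix.cons_val',
      Matrix.head_fin_const, Matrix.empty_val', Matrix.cons_val_fin_one,
      Matrix.mulVec, dotProduct, Fin.sum_univ_two, Fin.isValue,
      neg_mul, mul_one, one_mul, mul_zero, zero_mul, add_zero, zero_add, mul_neg, neg_neg]
      linear_combination c20
    · simp [Stmt8Aux.Pneg, Stmt8Aux.Qneg, Stmt8Aux.Ppos, Stmt8Aux.Qpos, σ3, σ1, σstar,
      Pi.add_apply, Pi.sub_apply, Pi.smul_apply, Pi.neg_apply, smul_eq_mul,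
      Matrix.cons_val_zero, Matrix.cons_val_one, Matrix.head_cons, Matrix.cons_val',
      Matrix.head_fin_const, Matrix.empty_val', Matrix.cons_val_fin_one,
      Matrix.mulVec, dotProduct, Fin.sum_univ_two, Fin.isValue,
      neg_mul, mul_one, one_mul, mul_zero, zero_mul, add_zero, zero_add, mul_neg, neg_neg]
      linear_combination c21
        + ((Complex.I / φ) * (F x * Complex.exp (-(lam ω * (x:ℂ)))
            + G x * (Stmt8Aux.cC τ ω * Complex.exp (lam ω * (x:ℂ))
              + Stmt8Aux.cD τ ω * Complex.exp (-(lam ω * (x:ℂ)))))) * hEE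
        + ((Complex.I / φ) * (F x * Complex.exp (-(lam ω * (x:ℂ)))
            + G x * (Stmt8Aux.cC τ ω * Complex.exp (lam ω * (x:ℂ))
              + Stmt8Aux.cD τ ω * Complex.exp (-(lam ω * (x:ℂ))))) * lam ω ^ 2) * Complex.I_sq
        - ((Complex.I / φ) * (F x * Complex.exp (-(lam ω * (x:ℂ)))
            + G x * (Stmt8Aux.cC τ ω * Complex.exp (lam ω * (x:ℂ))
              + Stmt8Aux.cD τ ω * Complex.exp (-(lam ω * (x:ℂ)))))) * hl2
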